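/- Let p, q, r, d be positive integers with d < p + q − r − 1, and let M = M(p,q,r,d) be the (p+q−r−d−1)×(d+1) matrix over ℚ with entries M_{i,j} = binomial(r, d+r−q+1+i−j). Suppose M_{s,t} ≠ 0 and k ≥ 0 satisfies s+k ≤ p+q−r−d−2 and t+k ≤ d. Then the (k+1)×(k+1) submatrix of M with entries {M_{i,j} : s ≤ i ≤ s+k, t ≤ j ≤ t+k} is invertible. -/

import Mathlib

/-- `binomial r b` with the convention that it vanishes for `b < 0` (and for `b > r`,
which `Nat.choose` already handles). -/
def ichoose (r : ℕ) (b : ℤ) : ℤ := if b < 0 then 0 else r.choose b.toNat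

/-- Entries of the matrix `M(p,q,r,d)`: `M_{i,j} = binomial(r, d+r−q+1+i−j)` over `ℚ`. -/
noncomputable def Mentry (q r d : ℕ) (i j : ℕ) : ℚ :=
  (ichoose r ((d : ℤ) + r - q + 1 + i - j) : ℚ)

open Polynomial
/-- Descartes-type lemma: a polynomial with at most `m` nonzero coefficients
divisible by `(X+1)^m` is zero. -/
lemma sparse_eq_zero_of_pow_dvd : ∀ (m : ℕ) (h : ℚ[X]),
    ((X : ℚ[X]) + 1) ^ m ∣ h → h.support.card ≤ m → h = 0 := by
  intro m
  induction m with
  | zero =>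
    intro h _ hcard
    rwa [Nat.le_zero, Finset.card_eq_zero, Polynomial.support_eq_empty] at hcard
  | succ m ih =>
    intro h hdvd hcard
    by_contra hne
    set v := h.natTrailingDegree with hv
    have hXv : (X : ℚ[X]) ^ v ∣ h := by
      rw [Polynomial.X_pow_dvd_iff]
      intro e he
      exact Polynomial.coeff_eq_zero_of_lt_natTrailingDegree he
    obtain ⟨g, hg⟩ := hXv
    have hcoeffg : ∀ n, g.coeff n = h.coeff (n + v) := by
      intro n; rw [hg, Polynomial.coeff_X_pow_mul]
    have hg0 : g.coeff 0 ≠ 0 := by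
      have h1 : h.coeff v ≠ 0 := Polynomial.coeff_natTrailingDegree_ne_zero.mpr hne
      rw [hcoeffg]; simpa using h1
    have hgcard : g.support.card ≤ m + 1 := by
      refine le_trans (Finset.card_le_card_of_injOn (fun n => n + v) ?_ ?_) hcard
      · intro n hn
        rw [Finset.mem_coe, Polynomial.mem_support_iff] at hn ⊢
        rwa [← hcoeffg]
      · intro x _ y _ hxy; simpa using hxy
    have hprime : Prime ((X : ℚ[X]) + 1) := by
      have := Polynomial.prime_X_sub_C (-1 : ℚ)
      simpa [sub_neg_eq_add] using this
    have hnd : ¬ ((X : ℚ[X]) + 1) ∣ X ^ v := by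
      intro hdv
      have := Polynomial.eval_dvd (x := (-1 : ℚ)) hdv
      simp at this
    have hdg : ((X : ℚ[X]) + 1) ^ (m + 1) ∣ g :=
      hprime.pow_dvd_of_dvd_mul_left _ hnd (hg ▸ hdvd)
    obtain ⟨u, hu⟩ := hdg
    have hdd : ((X : ℚ[X]) + 1) ^ m ∣ derivative g := by
      refine ⟨((m : ℚ[X]) + 1) * u + (X + 1) * derivative u, ?_⟩
      rw [hu, derivative_mul, derivative_pow]
      simp only [derivative_add, derivative_X, derivative_one, add_zero, Nat.cast_add,
        Nat.cast_one, Nat.add_sub_cancel, mul_one]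
      ring_nf
      simp only [map_add, map_one, Polynomial.C_eq_natCast]
      ring
    have hzero_mem : (0 : ℕ) ∈ g.support := Polynomial.mem_support_iff.mpr hg0
    have hsub : (derivative g).support ⊆ (g.support.erase 0).image (· - 1) := by
      intro n hn
      rw [Polynomial.mem_support_iff, Polynomial.coeff_derivative] at hn
      have h1 : g.coeff (n + 1) ≠ 0 := fun hz => hn (by rw [hz]; ring)
      exact Finset.mem_image.mpr ⟨n + 1,
        Finset.mem_erase.mpr ⟨Nat.succ_ne_zero n, Polynomial.mem_support_iff.mpr h1⟩, rfl⟩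
    have hcd : (derivative g).support.card ≤ m := by
      calc (derivative g).support.card ≤ ((g.support.erase 0).image (· - 1)).card :=
            Finset.card_le_card hsub
        _ ≤ (g.support.erase 0).card := Finset.card_image_le
        _ = g.support.card - 1 := Finset.card_erase_of_mem hzero_mem
        _ ≤ m := by omega
    have hder0 : derivative g = 0 := ih _ hdd hcd
    have hnd0 : g.natDegree = 0 := Polynomial.natDegree_eq_zero_of_derivative_eq_zero hder0
    obtain ⟨b, hb⟩ := Polynomial.natDegree_eq_zero.mp hnd0
    have hb0 : b = 0 := by
      have heval := congrArg (Polynomial.eval (-1 : ℚ)) (hb.trans hu)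
      simpa using heval
    rw [← hb, hb0] at hg0
    simp at hg0

/-- If `M(p,q,r,d)_{s,t} ≠ 0` and `s+k ≤ p+q−r−d−2`, `t+k ≤ d`, then the `(k+1)×(k+1)`
submatrix of `M(p,q,r,d)` with rows `s,…,s+k` and columns `t,…,t+k` is invertible. -/
theorem stmt_11 (p q r d : ℕ) (hp : 0 < p) (hq : 0 < q) (hr : 0 < r) (hd : 0 < d)
    (hsize : d + r + 2 ≤ p + q)
    (s t K : ℕ) (hs : s + K + d + r + 2 ≤ p + q) (ht : t + K ≤ d)
    (hst : Mentry q r d s t ≠ 0) :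
    (Matrix.of fun i j : Fin (K + 1) => Mentry q r d (s + i) (t + j)).det ≠ 0 := by
  classical
  set c : ℤ := (d : ℤ) + r - q + 1 + s - t with hcdef
  have hc0 : ¬ (c < 0) := by
    intro hlt
    exact hst (by simp [Mentry, ichoose, ← hcdef, hlt])
  set a : ℕ := c.toNat with hadef
  have hca : (a : ℤ) = c := Int.toNat_of_nonneg (not_lt.mp hc0)
  have har : a ≤ r := by
    by_contra hgt
    exact hst (by simp [Mentry, ichoose, ← hcdef, hc0, ← hadef,
      Nat.choose_eq_zero_of_lt (not_le.mp hgt)])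
  -- entries as coefficients of (X+1)^r * X^j
  have hM : ∀ i j : Fin (K + 1),
      Mentry q r d (s + i) (t + j) = ((((X : ℚ[X]) + 1) ^ r) * X ^ (j : ℕ)).coeff (a + i) := by
    intro i j
    have harg : (d : ℤ) + r - q + 1 + (↑(s + (i : ℕ))) - (↑(t + (j : ℕ)))
        = (a : ℤ) + i - j := by
      rw [hca, hcdef]; push_cast; ring
    rw [Mentry, harg, Polynomial.coeff_mul_X_pow', ichoose]
    by_cases hle : (j : ℕ) ≤ a + i
    · have htn : ((a : ℤ) + (i : ℕ) - (j : ℕ)).toNat = a + (i : ℕ) - (j : ℕ) := by omega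
      rw [if_pos hle, if_neg (by omega : ¬ ((a : ℤ) + (i : ℕ) - (j : ℕ) < 0)),
        Polynomial.coeff_X_add_one_pow, htn]
      push_cast
      ring
    · rw [if_neg hle, if_pos (by omega)]
      simp
  intro hdet
  obtain ⟨v, hv0, hvz⟩ := (Matrix.exists_mulVec_eq_zero_iff).mpr hdet
  set f : ℚ[X] := ∑ j : Fin (K + 1), Polynomial.C (v j) * X ^ (j : ℕ) with hfdef
  have hfcoeff : ∀ j : Fin (K + 1), f.coeff (j : ℕ) = v j := by
    intro j
    rw [hfdef, Polynomial.finset_sum_coeff]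
    rw [Finset.sum_eq_single j]
    · simp
    · intro b _ hb
      simp only [Polynomial.coeff_C_mul, Polynomial.coeff_X_pow]
      rw [if_neg (fun h => hb (Fin.val_injective h.symm))]
      simp
    · simp
  have hf0 : f ≠ 0 := by
    intro hfz
    apply hv0
    funext j
    have := hfcoeff j
    rw [hfz] at this
    simpa using this.symm
  set g : ℚ[X] := f * (X + 1) ^ r with hgdef
  have hgc : ∀ i : Fin (K + 1), g.coeff (a + i) = 0 := by
    intro i
    have hrow : (Matrix.of fun i j : Fin (K + 1) =>
        Mentry q r d (s + i) (t + j)).mulVec v i = 0 := congrFun hvz i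
    rw [Matrix.mulVec, dotProduct] at hrow
    have : g.coeff (a + i)
        = ∑ j : Fin (K + 1), v j * ((((X : ℚ[X]) + 1) ^ r) * X ^ (j : ℕ)).coeff (a + i) := by
      rw [hgdef, hfdef, Finset.sum_mul, Polynomial.finset_sum_coeff]
      refine Finset.sum_congr rfl fun j _ => ?_
      rw [show Polynomial.C (v j) * X ^ (j : ℕ) * ((X : ℚ[X]) + 1) ^ r
          = Polynomial.C (v j) * ((((X : ℚ[X]) + 1) ^ r) * X ^ (j : ℕ)) by ring,
        Polynomial.coeff_C_mul]
    rw [this, ← hrow]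
    refine Finset.sum_congr rfl fun j _ => ?_
    rw [Matrix.of_apply, hM i j, mul_comm]
  have hdeg : g.natDegree ≤ r + K := by
    refine le_trans (Polynomial.natDegree_mul_le) ?_
    have h1 : f.natDegree ≤ K := by
      rw [hfdef]
      refine Polynomial.natDegree_sum_le_of_forall_le _ _ (fun j _ => ?_)
      refine le_trans (Polynomial.natDegree_C_mul_le _ _) ?_
      rw [Polynomial.natDegree_X_pow]
      omega
    have h2 : (((X : ℚ[X]) + 1) ^ r).natDegree ≤ r := by
      have h3 : ((X : ℚ[X]) + 1).natDegree = 1 := by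
        simpa using Polynomial.natDegree_X_add_C (1 : ℚ)
      refine le_trans (Polynomial.natDegree_pow_le) ?_
      rw [h3, mul_one]
    omega
  have hsupp : g.support ⊆ Finset.range a ∪ Finset.Ico (a + K + 1) (r + K + 1) := by
    intro n hn
    have hb : n ≤ r + K := le_trans (Polynomial.le_natDegree_of_mem_supp n hn) hdeg
    have hmid : ¬ (a ≤ n ∧ n ≤ a + K) := by
      rintro ⟨h1, h2⟩
      have hi : n - a < K + 1 := by omega
      have := hgc ⟨n - a, hi⟩
      rw [Polynomial.mem_support_iff] at hn
      apply hn
      have hna : a + (⟨n - a, hi⟩ : Fin (K + 1)) = n := by simp; omega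
      rwa [hna] at this
    simp only [Finset.mem_union, Finset.mem_range, Finset.mem_Ico]
    omega
  have hcard : g.support.card ≤ r := by
    calc g.support.card ≤ (Finset.range a ∪ Finset.Ico (a + K + 1) (r + K + 1)).card :=
          Finset.card_le_card hsupp
      _ ≤ (Finset.range a).card + (Finset.Ico (a + K + 1) (r + K + 1)).card :=
          Finset.card_union_le _ _
      _ ≤ r := by simp [Nat.card_Ico]; omega
  have hgz : g = 0 := sparse_eq_zero_of_pow_dvd r g ⟨f, by rw [hgdef]; ring⟩ hcard
  rw [hgdef] at hgz
  rcases mul_eq_zero.mp hgz with h | h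
  · exact hf0 h
  · exact pow_ne_zero r (by
      intro hX
      have := congrArg (Polynomial.eval (0 : ℚ)) hX
      simp at this) h
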